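/- Let C_β, C_δ, C_R, α, x be positive reals. Then ∫_x^{∞} ( ∫_x^{u} (C_β·s^{α−1})/(C_R·s^{α}) ds ) · ((C_δ·u^{α−1})/(C_R·u^{α})) · exp( − ∫_x^{u} (C_δ·τ^{α−1})/(C_R·τ^{α}) dτ ) du = C_β / C_δ. In particular the value does not depend on x, α or C_R. -/

import Mathlib

open MeasureTheory

lemma inner_int (C CR α x u : ℝ) (hCR : 0 < CR) (hx : 0 < x) (hu : x ≤ u) :
    (∫ s in x..u, C * s ^ (α - 1) / (CR * s ^ α)) =
      C / CR * (Real.log u - Real.log x) := by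
  have hu0 : 0 < u := lt_of_lt_of_le hx hu
  have h1 : (∫ s in x..u, C * s ^ (α - 1) / (CR * s ^ α)) =
      ∫ s in x..u, C / CR * s⁻¹ := by
    apply intervalIntegral.integral_congr
    intro s hs
    rw [Set.uIcc_of_le hu] at hs
    have hs0 : 0 < s := lt_of_lt_of_le hx hs.1
    show C * s ^ (α - 1) / (CR * s ^ α) = C / CR * s⁻¹
    rw [show α - 1 = α + (-1) by ring, Real.rpow_add hs0, Real.rpow_neg_one]
    field_simp
  rw [h1, intervalIntegral.integral_const_mul, integral_inv
      (Set.notMem_uIcc_of_lt hx hu0), Real.log_div hu0.ne' hx.ne']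

theorem stmt8 (Cβ Cδ CR α x : ℝ)
    (hCβ : 0 < Cβ) (hCδ : 0 < Cδ) (hCR : 0 < CR) (hα : 0 < α) (hx : 0 < x) :
    (∫ u in Set.Ioi x,
        (∫ s in x..u, Cβ * s ^ (α - 1) / (CR * s ^ α)) *
          (Cδ * u ^ (α - 1) / (CR * u ^ α)) *
          Real.exp (-(∫ τ in x..u, Cδ * τ ^ (α - 1) / (CR * τ ^ α)))) = Cβ / Cδ := by
  set b := Cβ / CR with hbdef
  set c := Cδ / CR with hcdef
  have hb : 0 < b := div_pos hCβ hCR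
  have hc : 0 < c := div_pos hCδ hCR
  set L : ℝ → ℝ := fun u => Real.log u - Real.log x with hLdef
  set F : ℝ → ℝ := fun u => -(b / c) * ((c * L u + 1) * Real.exp (-(c * L u))) with hFdef
  set F' : ℝ → ℝ := fun u =>
    b * L u * (c * u⁻¹) * Real.exp (-(c * L u)) with hF'def
  -- rewrite the integrand
  have hcongr : (∫ u in Set.Ioi x,
        (∫ s in x..u, Cβ * s ^ (α - 1) / (CR * s ^ α)) *
          (Cδ * u ^ (α - 1) / (CR * u ^ α)) *
          Real.exp (-(∫ τ in x..u, Cδ * τ ^ (α - 1) / (CR * τ ^ α)))) =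
      ∫ u in Set.Ioi x, F' u := by
    apply setIntegral_congr_fun measurableSet_Ioi
    intro u hu
    have hu' : x < u := hu
    have hu0 : 0 < u := lt_trans hx hu'
    show (∫ s in x..u, Cβ * s ^ (α - 1) / (CR * s ^ α)) *
          (Cδ * u ^ (α - 1) / (CR * u ^ α)) *
          Real.exp (-(∫ τ in x..u, Cδ * τ ^ (α - 1) / (CR * τ ^ α))) = F' u
    rw [inner_int Cβ CR α x u hCR hx hu'.le, inner_int Cδ CR α x u hCR hx hu'.le]
    have : Cδ * u ^ (α - 1) / (CR * u ^ α) = c * u⁻¹ := by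
      rw [show α - 1 = α + (-1) by ring, Real.rpow_add hu0, Real.rpow_neg_one, hcdef]
      field_simp
    rw [this]
  rw [hcongr]
  -- derivative
  have hderiv : ∀ u ∈ Set.Ici x, HasDerivAt F (F' u) u := by
    intro u hu
    have hu0 : 0 < u := lt_of_lt_of_le hx hu
    have hL : HasDerivAt L u⁻¹ u := by
      exact (Real.hasDerivAt_log hu0.ne').sub_const (Real.log x)
    have h1 : HasDerivAt (fun u => c * L u + 1) (c * u⁻¹) u :=
      (hL.const_mul c).add_const 1
    have h2 : HasDerivAt (fun u => Real.exp (-(c * L u)))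
        (Real.exp (-(c * L u)) * -(c * u⁻¹)) u := ((hL.const_mul c).neg).exp
    have h3 : HasDerivAt F _ u := (h1.mul h2).const_mul (-(b / c))
    convert h3 using 1
    show b * L u * (c * u⁻¹) * Real.exp (-(c * L u)) = _
    field_simp
    ring
  -- nonnegativity
  have hpos : ∀ u ∈ Set.Ioi x, 0 ≤ F' u := by
    intro u hu
    have hu' : x < u := hu
    have hL0 : 0 ≤ L u := sub_nonneg.2 (Real.log_le_log hx hu'.le)
    have he := (Real.exp_pos (-(c * L u))).le
    have h1 : 0 ≤ b * L u := mul_nonneg hb.le hL0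
    have hu0 : 0 < u := lt_trans hx hu'
    have h2 : 0 ≤ c * u⁻¹ := mul_nonneg hc.le (inv_nonneg.2 hu0.le)
    exact mul_nonneg (mul_nonneg h1 h2) he
  -- limit at infinity
  have hlim : Filter.Tendsto F Filter.atTop (nhds 0) := by
    have hLtop : Filter.Tendsto L Filter.atTop Filter.atTop :=
      (Real.tendsto_log_atTop).atTop_add (tendsto_const_nhds (x := -Real.log x))
    have hcL : Filter.Tendsto (fun u => c * L u) Filter.atTop Filter.atTop :=
      hLtop.const_mul_atTop hc
    have hG : Filter.Tendsto (fun t : ℝ => (t + 1) * Real.exp (-t))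
        Filter.atTop (nhds 0) := by
      have h1 := Real.tendsto_pow_mul_exp_neg_atTop_nhds_zero 1
      have h2 := Real.tendsto_exp_neg_atTop_nhds_zero
      have := h1.add h2
      simp only [pow_one, add_zero] at this
      convert this using 2 with t
      ring
    have := (hG.comp hcL).const_mul (-(b / c))
    simp only [mul_zero] at this
    convert this using 2 with u
    rfl
  have key := integral_Ioi_of_hasDerivAt_of_nonneg'
    (g := F) (g' := F') (a := x) hderiv hpos hlim
  rw [key]
  have hLx : L x = 0 := by simp [hLdef]
  simp only [hFdef, hLx, mul_zero, zero_add, neg_zero, Real.exp_zero, mul_one, one_mul]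
  have hbc : b / c = Cβ / Cδ := by
    rw [hbdef, hcdef]
    field_simp
  rw [zero_sub, neg_neg, hbc]
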